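/- arXiv:2010.13436 — 2 statements merged into one kernel-verified Lean document; each statement's English description precedes it below -/
import Mathlib

section
/- In dimension d = 1 with ℏ > 0, the semiclassical harmonic oscillator propagator acts on coherent states by e^{−it Ĥ_ℏ/ℏ} Ψ_{z₀}^ℏ = e^{−it/2} Ψ_{φ_t(z₀)}^ℏ, where Ĥ_ℏ = (1/2)(−ℏ²∂_x² + x²), Ψ_{z₀}^ℏ is the coherent state centered at z₀ = (x₀,ξ₀), and φ_t(x₀,ξ₀) = (x₀ cos t + ξ₀ sin t, −x₀ sin t + ξ₀ cos t) is the classical rotation flow. -/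
open Real

/-- The one-dimensional coherent state
`Ψ_{(x₀,ξ₀)}^ℏ(x) = e^{−iξ₀x₀/(2ℏ)} e^{iξ₀x/ℏ} (πℏ)^{−1/4} e^{−(x−x₀)²/(2ℏ)}`. -/
noncomputable def coh1 (ℏ x₀ ξ₀ x : ℝ) : ℂ :=
  Complex.exp (-(Complex.I * (ξ₀ : ℂ) * (x₀ : ℂ)) / (2 * ℏ)) *
    Complex.exp (Complex.I * (ξ₀ : ℂ) * (x : ℂ) / ℏ) *
    (((π * ℏ) ^ (-(1 : ℝ) / 4) : ℝ) : ℂ) *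
    Complex.exp (-((x - x₀ : ℝ) : ℂ) ^ 2 / (2 * ℏ))

/-- The classical harmonic-oscillator flow `φ_t(x₀,ξ₀)`, a rotation of the plane. -/
noncomputable def rotFlow1 (t : ℝ) (z : ℝ × ℝ) : ℝ × ℝ :=
  (z.1 * Real.cos t + z.2 * Real.sin t, -z.1 * Real.sin t + z.2 * Real.cos t)

/-- The propagated coherent state `u(t,x) = e^{−it/2} Ψ_{φ_t(z₀)}^ℏ(x)`. -/
noncomputable def propState (ℏ : ℝ) (z₀ : ℝ × ℝ) (t x : ℝ) : ℂ :=
  Complex.exp (-(Complex.I * t) / 2) *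
    coh1 ℏ (rotFlow1 t z₀).1 (rotFlow1 t z₀).2 x

noncomputable def Af (z₀ : ℝ × ℝ) (t : ℝ) : ℂ :=
  (z₀.1 : ℂ) * Complex.cos t + (z₀.2 : ℂ) * Complex.sin t

noncomputable def Bf (z₀ : ℝ × ℝ) (t : ℝ) : ℂ :=
  -(z₀.1 : ℂ) * Complex.sin t + (z₀.2 : ℂ) * Complex.cos t

noncomputable def Gf (ℏ : ℝ) (z₀ : ℝ × ℝ) (t x : ℝ) : ℂ :=
  -(Complex.I * t) / 2 - Complex.I * Bf z₀ t * Af z₀ t / (2 * ℏ)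
    + Complex.I * Bf z₀ t * x / ℏ - ((x : ℂ) - Af z₀ t) ^ 2 / (2 * ℏ)

lemma exp_mul4 (p q r c : ℂ) :
    Complex.exp p * Complex.exp q * c * Complex.exp r = c * Complex.exp (p + q + r) := by
  rw [Complex.exp_add, Complex.exp_add]; ring

lemma propState_eq (ℏ : ℝ) (z₀ : ℝ × ℝ) (t x : ℝ) :
    propState ℏ z₀ t x = (((π * ℏ) ^ (-(1 : ℝ) / 4) : ℝ) : ℂ) * Complex.exp (Gf ℏ z₀ t x) := by
  simp only [propState, coh1, rotFlow1]
  rw [exp_mul4, mul_left_comm, ← Complex.exp_add]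
  congr 1
  simp only [Gf, Af, Bf]
  push_cast
  ring


lemma hasDerivAt_Af (z₀ : ℝ × ℝ) (t : ℝ) : HasDerivAt (Af z₀) (Bf z₀ t) t := by
  have h1 : HasDerivAt (fun s : ℝ => Complex.cos s) (-Complex.sin t) t :=
    (Complex.hasDerivAt_cos (t : ℂ)).comp_ofReal
  have h2 : HasDerivAt (fun s : ℝ => Complex.sin s) (Complex.cos t) t :=
    (Complex.hasDerivAt_sin (t : ℂ)).comp_ofReal
  have h := (h1.const_mul ((z₀.1 : ℂ))).add (h2.const_mul ((z₀.2 : ℂ)))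
  have heq : (z₀.1 : ℂ) * -Complex.sin t + (z₀.2 : ℂ) * Complex.cos t = Bf z₀ t := by
    simp only [Bf]; ring
  rw [← heq]
  exact h

lemma hasDerivAt_Bf (z₀ : ℝ × ℝ) (t : ℝ) : HasDerivAt (Bf z₀) (-Af z₀ t) t := by
  have h1 : HasDerivAt (fun s : ℝ => Complex.cos s) (-Complex.sin t) t :=
    (Complex.hasDerivAt_cos (t : ℂ)).comp_ofReal
  have h2 : HasDerivAt (fun s : ℝ => Complex.sin s) (Complex.cos t) t :=
    (Complex.hasDerivAt_sin (t : ℂ)).comp_ofReal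
  have h := (h2.const_mul (-(z₀.1 : ℂ))).add (h1.const_mul ((z₀.2 : ℂ)))
  have heq : -(z₀.1 : ℂ) * Complex.cos t + (z₀.2 : ℂ) * -Complex.sin t = -Af z₀ t := by
    simp only [Af]; ring
  rw [← heq]
  exact h

lemma hasDerivAt_ofReal' (x : ℝ) : HasDerivAt (fun y : ℝ => (y : ℂ)) 1 x := by
  have h := Complex.ofRealCLM.hasDerivAt (x := x)
  simp only [Complex.ofRealCLM_apply, Complex.ofReal_one] at h
  exact h

lemma hasDerivAt_Gf_x (ℏ : ℝ) (hℏ : ℏ ≠ 0) (z₀ : ℝ × ℝ) (t x : ℝ) :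
    HasDerivAt (fun y : ℝ => Gf ℏ z₀ t y)
      ((Complex.I * Bf z₀ t - ((x : ℂ) - Af z₀ t)) / ℏ) x := by
  have h0 := hasDerivAt_ofReal' x
  have hsub : HasDerivAt (fun y : ℝ => (y : ℂ) - Af z₀ t) 1 x := h0.sub_const _
  have h2 := (hsub.mul hsub).div_const ((2 : ℂ) * ℏ)
  have h1 := (h0.const_mul (Complex.I * Bf z₀ t)).div_const ((ℏ : ℂ))
  have h3 := ((hasDerivAt_const x
      (-(Complex.I * (t : ℂ)) / 2 - Complex.I * Bf z₀ t * Af z₀ t / (2 * ℏ))).add h1).sub h2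
  have hfe : (fun y : ℝ => Gf ℏ z₀ t y)
      = (fun y : ℝ => (-(Complex.I * (t : ℂ)) / 2 - Complex.I * Bf z₀ t * Af z₀ t / (2 * ℏ))
          + Complex.I * Bf z₀ t * (y : ℂ) / ℏ
          - ((y : ℂ) - Af z₀ t) * ((y : ℂ) - Af z₀ t) / (2 * ℏ)) := by
    funext y; simp only [Gf]; ring
  rw [hfe]
  refine h3.congr_deriv ?_
  rw [zero_add, mul_one,
    show (1 * ((x : ℂ) - Af z₀ t) + ((x : ℂ) - Af z₀ t) * 1) = 2 * ((x : ℂ) - Af z₀ t) by ring,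
    mul_div_mul_left _ _ (by norm_num : (2 : ℂ) ≠ 0), sub_div, sub_div, sub_div]

lemma hasDerivAt_Gf_t (ℏ : ℝ) (z₀ : ℝ × ℝ) (t x : ℝ) :
    HasDerivAt (fun s : ℝ => Gf ℏ z₀ s x)
      (-Complex.I / 2
        - Complex.I * ((-Af z₀ t) * Af z₀ t + Bf z₀ t * Bf z₀ t) / (2 * ℏ)
        + Complex.I * (-Af z₀ t) * x / ℏ
        + ((x : ℂ) - Af z₀ t) * Bf z₀ t / ℏ) t := by
  have hA := hasDerivAt_Af z₀ t
  have hB := hasDerivAt_Bf z₀ t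
  have t1 := (((hasDerivAt_ofReal' t).const_mul Complex.I).neg).div_const (2 : ℂ)
  have t2 := ((hB.const_mul Complex.I).mul hA).div_const ((2 : ℂ) * ℏ)
  have t3 := ((hB.const_mul Complex.I).mul_const ((x : ℂ))).div_const ((ℏ : ℂ))
  have hxA := hA.const_sub ((x : ℂ))
  have t4 := (hxA.mul hxA).div_const ((2 : ℂ) * ℏ)
  have comb := ((t1.sub t2).add t3).sub t4
  have hfe : (fun s : ℝ => Gf ℏ z₀ s x)
      = (fun s : ℝ => -(Complex.I * (s : ℂ)) / 2
          - Complex.I * Bf z₀ s * Af z₀ s / (2 * ℏ)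
          + Complex.I * Bf z₀ s * (x : ℂ) / ℏ
          - ((x : ℂ) - Af z₀ s) * ((x : ℂ) - Af z₀ s) / (2 * ℏ)) := by
    funext s; simp only [Gf]; ring
  rw [hfe]
  exact comb.congr_deriv (by ring)

lemma propState_hasDerivAt_x (ℏ : ℝ) (hℏ : ℏ ≠ 0) (z₀ : ℝ × ℝ) (t x : ℝ) :
    HasDerivAt (propState ℏ z₀ t)
      ((((π * ℏ) ^ (-(1 : ℝ) / 4) : ℝ) : ℂ) * Complex.exp (Gf ℏ z₀ t x) *
        ((Complex.I * Bf z₀ t - ((x : ℂ) - Af z₀ t)) / ℏ)) x := by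
  have h := ((hasDerivAt_Gf_x ℏ hℏ z₀ t x).cexp).const_mul
    ((((π * ℏ) ^ (-(1 : ℝ) / 4) : ℝ) : ℂ))
  have hfe : propState ℏ z₀ t
      = fun y => (((π * ℏ) ^ (-(1 : ℝ) / 4) : ℝ) : ℂ) * Complex.exp (Gf ℏ z₀ t y) :=
    funext fun y => propState_eq ℏ z₀ t y
  rw [hfe]
  exact h.congr_deriv (by ring)

lemma iteratedDeriv_two_propState (ℏ : ℝ) (hℏ : ℏ ≠ 0) (z₀ : ℝ × ℝ) (t x : ℝ) :
    iteratedDeriv 2 (propState ℏ z₀ t) x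
      = (((π * ℏ) ^ (-(1 : ℝ) / 4) : ℝ) : ℂ) * Complex.exp (Gf ℏ z₀ t x) *
          ((Complex.I * Bf z₀ t - ((x : ℂ) - Af z₀ t)) / ℏ) *
          ((Complex.I * Bf z₀ t - ((x : ℂ) - Af z₀ t)) / ℏ)
        + (((π * ℏ) ^ (-(1 : ℝ) / 4) : ℝ) : ℂ) * Complex.exp (Gf ℏ z₀ t x) * (-1 / ℏ) := by
  have h2 : iteratedDeriv 2 (propState ℏ z₀ t) = deriv (deriv (propState ℏ z₀ t)) := by
    have : (2 : ℕ) = 1 + 1 := rfl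
    rw [this, iteratedDeriv_succ, iteratedDeriv_one]
  rw [h2]
  have hd : deriv (propState ℏ z₀ t)
      = fun y => ((((π * ℏ) ^ (-(1 : ℝ) / 4) : ℝ) : ℂ) * Complex.exp (Gf ℏ z₀ t y)) *
          ((Complex.I * Bf z₀ t - ((y : ℂ) - Af z₀ t)) / ℏ) := by
    funext y
    exact (propState_hasDerivAt_x ℏ hℏ z₀ t y).deriv
  rw [hd]
  have hlin : HasDerivAt (fun y : ℝ => (Complex.I * Bf z₀ t - ((y : ℂ) - Af z₀ t)) / (ℏ : ℂ))
      ((-1 : ℂ) / ℏ) x := by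
    have := (((hasDerivAt_ofReal' x).sub_const (Af z₀ t)).const_sub
      (Complex.I * Bf z₀ t)).div_const ((ℏ : ℂ))
    convert this using 1
  have hprod := (((hasDerivAt_Gf_x ℏ hℏ z₀ t x).cexp).const_mul
    ((((π * ℏ) ^ (-(1 : ℝ) / 4) : ℝ) : ℂ))).mul hlin
  have := hprod.deriv
  exact this.trans (by ring)

lemma keylem (i a b xx h C E : ℂ) (hi : i ^ 2 = -1) (hh : h ≠ 0) :
    C * E * (-i / 2 - i * ((-a) * a + b * b) / (2 * h) + i * (-a) * xx / h + (xx - a) * b / h)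
      = (i * h)⁻¹ * (1 / 2 * (-h ^ 2 * (C * E * ((i * b - (xx - a)) / h) * ((i * b - (xx - a)) / h)
          + C * E * (-1 / h)) + xx ^ 2 * (C * E))) := by
  have hi0 : i ≠ 0 := by intro h0; rw [h0] at hi; simp at hi
  rw [eq_inv_mul_iff_mul_eq₀ (mul_ne_zero hi0 hh)]
  field_simp
  linear_combination (C * E * (a ^ 2 - 2 * a * xx - h)) * hi

lemma propState_hasDerivAt_t (ℏ : ℝ) (z₀ : ℝ × ℝ) (t x : ℝ) :
    HasDerivAt (fun s => propState ℏ z₀ s x)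
      ((((π * ℏ) ^ (-(1 : ℝ) / 4) : ℝ) : ℂ) * Complex.exp (Gf ℏ z₀ t x) *
        (-Complex.I / 2
          - Complex.I * ((-Af z₀ t) * Af z₀ t + Bf z₀ t * Bf z₀ t) / (2 * ℏ)
          + Complex.I * (-Af z₀ t) * x / ℏ
          + ((x : ℂ) - Af z₀ t) * Bf z₀ t / ℏ)) t := by
  have h := ((hasDerivAt_Gf_t ℏ z₀ t x).cexp).const_mul ((((π * ℏ) ^ (-(1 : ℝ) / 4) : ℝ) : ℂ))
  have hfe : (fun s => propState ℏ z₀ s x)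
      = fun s => (((π * ℏ) ^ (-(1 : ℝ) / 4) : ℝ) : ℂ) * Complex.exp (Gf ℏ z₀ s x) :=
    funext fun s => propState_eq ℏ z₀ s x
  rw [hfe]
  exact h.congr_deriv (by ring)

/-- In dimension one, `e^{−itĤ_ℏ/ℏ} Ψ_{z₀}^ℏ = e^{−it/2} Ψ_{φ_t(z₀)}^ℏ`: the function
`u(t,x) = e^{−it/2} Ψ_{φ_t(z₀)}^ℏ(x)` satisfies `u(0,·) = Ψ_{z₀}^ℏ` and solves the
Schrödinger equation `iℏ ∂_t u = (1/2)(−ℏ²∂_x² + x²)u`. -/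
theorem stmt11 (ℏ : ℝ) (hℏ : 0 < ℏ) (z₀ : ℝ × ℝ) :
    (∀ x : ℝ, propState ℏ z₀ 0 x = coh1 ℏ z₀.1 z₀.2 x) ∧
    (∀ t x : ℝ,
      HasDerivAt (fun s => propState ℏ z₀ s x)
        ((Complex.I * (ℏ : ℂ))⁻¹ *
          ((1 / 2) * (-(ℏ : ℂ) ^ 2 * iteratedDeriv 2 (propState ℏ z₀ t) x +
            (x : ℂ) ^ 2 * propState ℏ z₀ t x))) t) := by
  have hℏ' : ℏ ≠ 0 := ne_of_gt hℏ
  have hhC : ((ℏ : ℂ)) ≠ 0 := Complex.ofReal_ne_zero.mpr hℏ'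
  constructor
  · intro x
    simp [propState, rotFlow1]
  · intro t x
    have hmain := propState_hasDerivAt_t ℏ z₀ t x
    have heq : ((Complex.I * (ℏ : ℂ))⁻¹ *
          ((1 / 2) * (-(ℏ : ℂ) ^ 2 * iteratedDeriv 2 (propState ℏ z₀ t) x +
            (x : ℂ) ^ 2 * propState ℏ z₀ t x)))
        = ((((π * ℏ) ^ (-(1 : ℝ) / 4) : ℝ) : ℂ) * Complex.exp (Gf ℏ z₀ t x) *
            (-Complex.I / 2
              - Complex.I * ((-Af z₀ t) * Af z₀ t + Bf z₀ t * Bf z₀ t) / (2 * ℏ)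
              + Complex.I * (-Af z₀ t) * x / ℏ
              + ((x : ℂ) - Af z₀ t) * Bf z₀ t / ℏ)) := by
      rw [iteratedDeriv_two_propState ℏ hℏ' z₀ t x, propState_eq ℏ z₀ t x]
      exact (keylem Complex.I (Af z₀ t) (Bf z₀ t) (x : ℂ) (ℏ : ℂ)
        ((((π * ℏ) ^ (-(1 : ℝ) / 4) : ℝ) : ℂ)) (Complex.exp (Gf ℏ z₀ t x))
        Complex.I_sq hhC).symm
    rw [heq]
    exact hmain
end

section
/- With ω, {v_n}, {ν_n} as above and ℋ_n := v_n Σ_j ν_{n,j} H_j, a Borel probability measure μ on ℝ^{2d} is invariant under the Hamiltonian flow φ_t^H of H = Σ_j ω_j H_j for all t ∈ ℝ if and only if it is invariant under each of the flows φ_t^{ℋ_n} for all t ∈ ℝ and n = 1,…,d_ω. -/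
set_option maxHeartbeats 1000000


open MeasureTheory

/-- The diagonal harmonic-oscillator flow with frequency vector `α` on `ℂ^d ≅ ℝ^{2d}`:
`z_j ↦ e^{−iα_j t} z_j`. -/
noncomputable def diagFlow (d : ℕ) (α : Fin d → ℝ) (t : ℝ) (z : Fin d → ℂ) :
    Fin d → ℂ :=
  fun j => Complex.exp (-Complex.I * ((α j * t : ℝ) : ℂ)) * z j

section AuxKron


open Submodule Module

noncomputable section

theorem kron {m : ℕ} (v : (EuclideanSpace ℝ (Fin m)))
    (hv : LinearIndependent ℚ (fun n : Fin m => v n))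
    (c : ℝ) (hc : c ≠ 0) (H : AddSubgroup (EuclideanSpace ℝ (Fin m)))
    (hcl : IsClosed (H : Set (EuclideanSpace ℝ (Fin m))))
    (hline : ∀ t : ℝ, t • v ∈ H)
    (hlat : ∀ i : Fin m, c • EuclideanSpace.single i (1 : ℝ) ∈ H)
    (x : (EuclideanSpace ℝ (Fin m))) : x ∈ H := by
  classical
  -- the connected directions of `H`
  set W : Submodule ℝ (EuclideanSpace ℝ (Fin m)) :=
    { carrier := {y : (EuclideanSpace ℝ (Fin m)) | ∀ t : ℝ, t • y ∈ H}
      add_mem' := fun {a b} ha hb t => by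
        simpa [smul_add] using H.add_mem (ha t) (hb t)
      zero_mem' := fun t => by simpa using H.zero_mem
      smul_mem' := fun r y hy t => by
        simpa [smul_smul] using hy (t * r) } with hWdef
  have hWsub : (W : Set (EuclideanSpace ℝ (Fin m))) ⊆ (H : Set (EuclideanSpace ℝ (Fin m))) := fun y hy => by
    simpa using hy 1
  by_cases hW : W = ⊤
  · have : x ∈ W := by rw [hW]; trivial
    exact hWsub this
  exfalso
  have hFbot : Wᗮ ≠ ⊥ := fun h => hW (Submodule.orthogonal_eq_bot_iff.mp h)
  -- the lattice part
  set L : Submodule ℤ ↥Wᗮ :=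
    { carrier := {y : ↥Wᗮ | (y : (EuclideanSpace ℝ (Fin m))) ∈ H}
      add_mem' := fun {a b} ha hb => by
        simpa using H.add_mem ha hb
      zero_mem' := by simpa using H.zero_mem
      smul_mem' := fun n y hy => by
        simpa using AddSubgroup.zsmul_mem H hy n } with hLdef
  -- discreteness of `L`
  have key : ∃ ε > (0:ℝ), ∀ y : ↥Wᗮ, y ∈ L → ‖y‖ < ε → y = 0 := by
    by_contra hcon
    push_neg at hcon
    have hex : ∀ k : ℕ, ∃ y : ↥Wᗮ, y ∈ L ∧ ‖y‖ < 1 / (k + 1) ∧ y ≠ 0 := by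
      intro k
      obtain ⟨y, hyL, hy, hy0⟩ := hcon (1 / (k + 1)) (by positivity)
      exact ⟨y, hyL, hy, hy0⟩
    choose g hgL hgn hg0 using hex
    set xk : ℕ → (EuclideanSpace ℝ (Fin m)) := fun k => (g k : (EuclideanSpace ℝ (Fin m))) with hxk
    have hxkH : ∀ k, xk k ∈ H := fun k => hgL k
    have hxknorm : ∀ k, ‖xk k‖ = ‖g k‖ := fun k => (Submodule.coe_norm (g k)).symm
    have hxk0 : ∀ k, xk k ≠ 0 := by
      intro k h
      exact hg0 k (by exact_mod_cast Subtype.ext h)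
    have hxknpos : ∀ k, 0 < ‖xk k‖ := fun k => norm_pos_iff.mpr (hxk0 k)
    set u : ℕ → (EuclideanSpace ℝ (Fin m)) := fun k => ‖xk k‖⁻¹ • xk k with hu
    have humem : ∀ k, u k ∈ Metric.sphere (0:(EuclideanSpace ℝ (Fin m))) 1 := by
      intro k
      rw [mem_sphere_zero_iff_norm, hu]
      rw [norm_smul, Real.norm_eq_abs, abs_of_pos (inv_pos.mpr (hxknpos k)),
        inv_mul_cancel₀ (ne_of_gt (hxknpos k))]
    obtain ⟨uu, huumem, φ, hφmono, hφtend⟩ :=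
      (isCompact_sphere (0:(EuclideanSpace ℝ (Fin m))) 1).tendsto_subseq humem
    have hxk_tend : Filter.Tendsto (fun k => ‖xk (φ k)‖) Filter.atTop (nhds 0) := by
      have h1 : Filter.Tendsto (fun k : ℕ => 1 / ((k:ℝ) + 1)) Filter.atTop (nhds 0) :=
        tendsto_one_div_add_atTop_nhds_zero_nat
      have hφat : Filter.Tendsto φ Filter.atTop Filter.atTop := hφmono.tendsto_atTop
      refine squeeze_zero (fun k => (norm_nonneg _)) (fun k => ?_) (h1.comp hφat)
      exact le_of_lt ((hxknorm (φ k)) ▸ (hgn (φ k)))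
    -- every multiple of uu is in H
    have huuW : uu ∈ W := by
      intro t
      have hseq : ∀ k : ℕ, (⌊t / ‖xk (φ k)‖⌋ : ℤ) • xk (φ k) ∈ H := fun k =>
        AddSubgroup.zsmul_mem H (hxkH (φ k)) _
      have htt : Filter.Tendsto (fun k : ℕ => (⌊t / ‖xk (φ k)‖⌋ : ℤ) • xk (φ k))
          Filter.atTop (nhds (t • uu)) := by
        rw [tendsto_iff_norm_sub_tendsto_zero]
        have hbound : ∀ k : ℕ,
            ‖(⌊t / ‖xk (φ k)‖⌋ : ℤ) • xk (φ k) - t • uu‖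
              ≤ ‖xk (φ k)‖ + |t| * ‖u (φ k) - uu‖ := by
          intro k
          have h0 : 0 < ‖xk (φ k)‖ := hxknpos (φ k)
          have hdec : (⌊t / ‖xk (φ k)‖⌋ : ℤ) • xk (φ k) - t • uu
              = ((⌊t / ‖xk (φ k)‖⌋ - t / ‖xk (φ k)‖ : ℝ)) • xk (φ k)
                + t • (u (φ k) - uu) := by
            have h1 : (t / ‖xk (φ k)‖) • xk (φ k) = t • u (φ k) := by
              rw [hu, div_eq_mul_inv, mul_smul, smul_comm]
            have hcast : (⌊t / ‖xk (φ k)‖⌋ : ℤ) • xk (φ k)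
                = ((⌊t / ‖xk (φ k)‖⌋ : ℝ)) • xk (φ k) :=
              (Int.cast_smul_eq_zsmul ℝ _ _).symm
            rw [hcast, sub_smul, smul_sub, h1]
            abel
          rw [hdec]
          refine (norm_add_le _ _).trans ?_
          gcongr
          · rw [norm_smul]
            have h1 : |(⌊t / ‖xk (φ k)‖⌋ : ℝ) - t / ‖xk (φ k)‖| ≤ 1 := by
              refine abs_le.mpr ⟨?_, ?_⟩
              · have := Int.lt_floor_add_one (t / ‖xk (φ k)‖)
                linarith
              · have := Int.floor_le (t / ‖xk (φ k)‖)
                linarith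
            calc ‖(((⌊t / ‖xk (φ k)‖⌋ : ℝ)) - t / ‖xk (φ k)‖)‖ * ‖xk (φ k)‖
                ≤ 1 * ‖xk (φ k)‖ := by
                  gcongr
                  simpa [Real.norm_eq_abs] using h1
              _ = ‖xk (φ k)‖ := one_mul _
          · rw [norm_smul, Real.norm_eq_abs]
        have hb : Filter.Tendsto
            (fun k => ‖xk (φ k)‖ + |t| * ‖u (φ k) - uu‖) Filter.atTop (nhds 0) := by
          have h2 : Filter.Tendsto (fun k => ‖u (φ k) - uu‖) Filter.atTop (nhds 0) := by
            rw [← tendsto_iff_norm_sub_tendsto_zero]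
            exact hφtend
          have := hxk_tend.add (h2.const_mul |t|)
          simpa using this
        exact squeeze_zero (fun k => norm_nonneg _) hbound hb
      exact hcl.mem_of_tendsto htt (Filter.Eventually.of_forall hseq)
    -- but uu ∈ Wᗮ as well
    have huuF : uu ∈ Wᗮ := by
      have hmemF : ∀ k, u (φ k) ∈ Wᗮ := fun k => Wᗮ.smul_mem _ (g (φ k)).2
      have hcls : IsClosed (Wᗮ : Set (EuclideanSpace ℝ (Fin m))) := Submodule.closed_of_finiteDimensional Wᗮ
      exact hcls.mem_of_tendsto hφtend (Filter.Eventually.of_forall hmemF)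
    have huu0 : uu = 0 := by
      have hWW : uu ∈ Wᗮᗮ := by
        rw [Submodule.orthogonal_orthogonal]
        exact huuW
      have := (Submodule.mem_orthogonal Wᗮ uu).mp hWW uu huuF
      exact inner_self_eq_zero.mp this
    have hn1 : ‖uu‖ = 1 := by rwa [mem_sphere_zero_iff_norm] at huumem
    rw [huu0, norm_zero] at hn1
    exact zero_ne_one hn1
  obtain ⟨ε, hε, hsmall⟩ := key
  haveI hdisc : DiscreteTopology ↥L := by
    refine discreteTopology_iff_isOpen_singleton_zero.mpr
      ⟨Metric.ball 0 ε, Metric.isOpen_ball, ?_⟩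
    ext y
    rw [Set.mem_preimage, mem_ball_zero_iff, Set.mem_singleton_iff]
    constructor
    · intro hy
      exact Subtype.ext (hsmall (↑y) y.2 hy)
    · intro hy
      rw [hy, ZeroMemClass.coe_zero, norm_zero]
      exact hε
  -- projections of lattice vectors are in `L`
  have hFsubH : ∀ y : (EuclideanSpace ℝ (Fin m)), y ∈ H → ((orthogonalProjection Wᗮ y : (EuclideanSpace ℝ (Fin m)))) ∈ H := by
    intro y hy
    have h1 : y - orthogonalProjection Wᗮ y ∈ Wᗮᗮ := Submodule.sub_starProjection_mem_orthogonal (K := Wᗮ) y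
    rw [Submodule.orthogonal_orthogonal] at h1
    have := H.sub_mem hy (hWsub h1)
    simpa using this
  -- `L` spans `Wᗮ`
  have hspan : span ℝ (L : Set ↥Wᗮ) = ⊤ := by
    have hpL : ∀ i : Fin m, orthogonalProjection Wᗮ (c • EuclideanSpace.single i (1:ℝ)) ∈ L :=
      fun i => hFsubH _ (hlat i)
    have htop : span ℝ (Set.range fun i : Fin m => c • EuclideanSpace.single i (1:ℝ)) = ⊤ := by
      rw [eq_top_iff]
      intro y _
      have hy : y ∈ span ℝ (Set.range fun i : Fin m => EuclideanSpace.single i (1:ℝ)) := by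
        have hEq : (Set.range fun i : Fin m => EuclideanSpace.single i (1:ℝ))
            = Set.range (EuclideanSpace.basisFun (Fin m) ℝ).toBasis := by
          ext w
          simp [OrthonormalBasis.coe_toBasis, EuclideanSpace.basisFun_apply]
        rw [hEq, (EuclideanSpace.basisFun (Fin m) ℝ).toBasis.span_eq]
        trivial
      have hsub : (Set.range fun i : Fin m => EuclideanSpace.single i (1:ℝ))
          ⊆ (span ℝ (Set.range fun i : Fin m => c • EuclideanSpace.single i (1:ℝ)) : Set (EuclideanSpace ℝ (Fin m))) := by
        rintro w ⟨i, rfl⟩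
        have hmem : c • EuclideanSpace.single i (1:ℝ)
            ∈ span ℝ (Set.range fun i : Fin m => c • EuclideanSpace.single i (1:ℝ)) :=
          Submodule.subset_span ⟨i, rfl⟩
        have := Submodule.smul_mem _ c⁻¹ hmem
        simpa [smul_smul, inv_mul_cancel₀ hc] using this
      exact (span_le.mpr hsub) hy
    rw [eq_top_iff]
    intro y _
    have hyproj : y = orthogonalProjection Wᗮ (y : (EuclideanSpace ℝ (Fin m))) :=
      (orthogonalProjection_mem_subspace_eq_self y).symm
    have hmap : y ∈ Submodule.map ((orthogonalProjection Wᗮ).toLinearMap)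
        (span ℝ (Set.range fun i : Fin m => c • EuclideanSpace.single i (1:ℝ))) := by
      rw [htop]
      exact ⟨(y : (EuclideanSpace ℝ (Fin m))), trivial, hyproj.symm⟩
    rw [← Submodule.span_image] at hmap
    refine span_le.mpr ?_ hmap
    rintro w ⟨_, ⟨i, rfl⟩, rfl⟩
    exact Submodule.subset_span (hpL i)
  haveI : IsZLattice ℝ L := ⟨hspan⟩
  haveI : Nontrivial ↥Wᗮ := Submodule.nontrivial_iff_ne_bot.mpr hFbot
  haveI : Nontrivial ↥L := by
    refine Submodule.nontrivial_iff_ne_bot.mpr (fun h => ?_)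
    rw [h] at hspan
    simp only [Submodule.bot_coe, Submodule.span_empty, span_zero] at hspan
    exact absurd hspan.symm (by simpa using (bot_ne_top : (⊥ : Submodule ℝ ↥Wᗮ) ≠ ⊤))
  haveI : Module.Free ℤ ↥L := ZLattice.module_free ℝ L
  haveI : Module.Finite ℤ ↥L := ZLattice.module_finite ℝ L
  set b := Module.Free.chooseBasis ℤ ↥L with hb
  obtain ⟨i₀⟩ := b.index_nonempty
  set bR := b.ofZLatticeBasis ℝ with hbR
  set ψ : (EuclideanSpace ℝ (Fin m)) →ₗ[ℝ] ℝ := (bR.coord i₀) ∘ₗ (orthogonalProjection Wᗮ).toLinearMap with hψ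
  -- ψ kills v
  have hψv : ψ v = 0 := by
    have hvW : v ∈ W := fun t => hline t
    have h0 : orthogonalProjection Wᗮ v = 0 :=
      Submodule.orthogonalProjectionOnto_apply_of_mem_orthogonal
        (by rw [Submodule.orthogonal_orthogonal]; exact hvW)
    simp [hψ, h0]
  -- values of ψ on the scaled standard basis are integers
  have hint : ∀ i : Fin m, ∃ zz : ℤ, ψ (c • EuclideanSpace.single i (1:ℝ)) = zz := by
    intro i
    have hpL : orthogonalProjection Wᗮ (c • EuclideanSpace.single i (1:ℝ)) ∈ L :=
      hFsubH _ (hlat i)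
    refine ⟨b.repr ⟨_, hpL⟩ i₀, ?_⟩
    have hrepr := b.ofZLatticeBasis_repr_apply ℝ (L := L)
      ⟨orthogonalProjection Wᗮ (c • EuclideanSpace.single i (1:ℝ)), hpL⟩ i₀
    simp only [hψ, LinearMap.coe_comp, Function.comp_apply, ContinuousLinearMap.coe_coe,
      Basis.coord_apply]
    rw [show (orthogonalProjection Wᗮ (c • EuclideanSpace.single i (1:ℝ)))
      = ((⟨orthogonalProjection Wᗮ (c • EuclideanSpace.single i (1:ℝ)), hpL⟩ : ↥L) : ↥Wᗮ)
      from rfl, ← hbR] at *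
    rw [hrepr]
  choose z hz using hint
  -- decomposition of vectors in the standard basis
  have hsumrepr : ∀ y : (EuclideanSpace ℝ (Fin m)), ∑ i, y i • EuclideanSpace.single i (1:ℝ) = y := by
    intro y
    have h := (EuclideanSpace.basisFun (Fin m) ℝ).toBasis.sum_repr y
    simpa [OrthonormalBasis.coe_toBasis_repr_apply, OrthonormalBasis.coe_toBasis,
      EuclideanSpace.basisFun_repr, EuclideanSpace.basisFun_apply] using h
  have hψsingle : ∀ i, ψ (EuclideanSpace.single i (1:ℝ)) = c⁻¹ * z i := by
    intro i
    have h1 := hz i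
    rw [_root_.map_smul, smul_eq_mul] at h1
    field_simp [hc] at h1 ⊢
    linarith [h1]
  have hψall : ∀ y : (EuclideanSpace ℝ (Fin m)), ψ y = ∑ i, y i * (c⁻¹ * z i) := by
    intro y
    conv_lhs => rw [← hsumrepr y]
    rw [map_sum]
    exact Finset.sum_congr rfl fun i _ => by rw [_root_.map_smul, smul_eq_mul, hψsingle]
  -- the integer relation
  have hrel : ∑ i, v i * (z i : ℝ) = 0 := by
    have h0 : ∑ i, v i * (c⁻¹ * z i) = 0 := by rw [← hψall v, hψv]
    have h1 : ∑ i, v i * (c⁻¹ * z i) = c⁻¹ * ∑ i, v i * z i := by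
      rw [Finset.mul_sum]
      exact Finset.sum_congr rfl fun i _ => by ring
    rw [h1] at h0
    rcases mul_eq_zero.mp h0 with h | h
    · exact absurd h (inv_ne_zero hc)
    · exact h
  have hz0 : ∀ i, z i = 0 := by
    have hli := Fintype.linearIndependent_iff.mp hv (fun i => (z i : ℚ))
    have hsum : ∑ i, ((z i : ℚ)) • v i = 0 := by
      have : ∑ i, ((z i : ℚ)) • v i = ∑ i, v i * (z i : ℝ) := by
        refine Finset.sum_congr rfl fun i _ => ?_
        rw [Rat.smul_def]
        push_cast
        ring
      rw [this, hrel]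
    intro i
    exact_mod_cast hli hsum i
  -- contradiction: ψ is zero but evaluates to 1 on bR i₀
  have hψzero : ∀ y : (EuclideanSpace ℝ (Fin m)), ψ y = 0 := by
    intro y
    rw [hψall y]
    simp [hz0]
  have hone : ψ ((bR i₀ : ↥Wᗮ) : (EuclideanSpace ℝ (Fin m))) = 1 := by
    have hproj : orthogonalProjection Wᗮ ((bR i₀ : ↥Wᗮ) : (EuclideanSpace ℝ (Fin m))) = bR i₀ :=
      orthogonalProjection_mem_subspace_eq_self (bR i₀)
    simp [hψ, hproj, Basis.coord_apply]
  rw [hψzero _] at hone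
  exact zero_ne_one hone

end

end AuxKron

section AuxFlow
noncomputable section


/-- The multi-parameter diagonal flow with rational frequency matrix `ν`. -/
noncomputable def phiFlow {d m : ℕ} (ν : Fin m → Fin d → ℚ) (s : Fin m → ℝ)
    (z : Fin d → ℂ) : Fin d → ℂ :=
  fun j => Complex.exp (-Complex.I * ((∑ n, (ν n j : ℝ) * s n : ℝ) : ℂ)) * z j

theorem phiFlow_continuous {d m : ℕ} (ν : Fin m → Fin d → ℚ) (s : Fin m → ℝ) :
    Continuous (phiFlow ν s) := by
  refine continuous_pi fun j => ?_
  exact continuous_const.mul (continuous_apply j)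

theorem phiFlow_measurable {d m : ℕ} (ν : Fin m → Fin d → ℚ) (s : Fin m → ℝ) :
    Measurable (phiFlow ν s) :=
  (phiFlow_continuous ν s).measurable

theorem phiFlow_cont_param {d m : ℕ} (ν : Fin m → Fin d → ℚ) (z : Fin d → ℂ) :
    Continuous (fun s : Fin m → ℝ => phiFlow ν s z) := by
  refine continuous_pi fun j => ?_
  refine Continuous.mul ?_ continuous_const
  refine Complex.continuous_exp.comp ?_
  refine Continuous.mul continuous_const ?_
  refine Complex.continuous_ofReal.comp ?_
  exact continuous_finset_sum _ fun n _ => continuous_const.mul (continuous_apply n)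

theorem phiFlow_zero {d m : ℕ} (ν : Fin m → Fin d → ℚ) : phiFlow ν 0 = id := by
  funext z
  funext j
  simp [phiFlow]

theorem phiFlow_add {d m : ℕ} (ν : Fin m → Fin d → ℚ) (s s' : Fin m → ℝ) :
    phiFlow ν (s + s') = phiFlow ν s ∘ phiFlow ν s' := by
  funext z
  funext j
  simp only [phiFlow, Function.comp_apply]
  have h : (∑ n, (ν n j : ℝ) * (s + s') n : ℝ)
      = (∑ n, (ν n j : ℝ) * s n) + (∑ n, (ν n j : ℝ) * s' n) := by
    rw [← Finset.sum_add_distrib]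
    exact Finset.sum_congr rfl fun n _ => by simp [mul_add]
  rw [h]
  push_cast
  rw [mul_add, Complex.exp_add]
  ring

/-- The set of parameters whose flow preserves `μ` is sequentially closed. -/
theorem phiFlow_inv_of_tendsto {d m : ℕ} (ν : Fin m → Fin d → ℚ)
    (μ : Measure (Fin d → ℂ)) [IsProbabilityMeasure μ]
    (s : ℕ → Fin m → ℝ) (s0 : Fin m → ℝ)
    (hs : ∀ k, Measure.map (phiFlow ν (s k)) μ = μ)
    (hlim : Filter.Tendsto s Filter.atTop (nhds s0)) :
    Measure.map (phiFlow ν s0) μ = μ := by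
  haveI : IsProbabilityMeasure (Measure.map (phiFlow ν s0) μ) :=
    Measure.isProbabilityMeasure_map (phiFlow_measurable ν s0).aemeasurable
  refine ext_of_forall_lintegral_eq_of_IsFiniteMeasure (fun f => ?_)
  have hfm : Measurable fun x : Fin d → ℂ => (f x : ENNReal) :=
    measurable_coe_nnreal_ennreal.comp f.continuous.measurable
  rw [lintegral_map hfm (phiFlow_measurable ν s0)]
  have hk : ∀ k, ∫⁻ z, (f (phiFlow ν (s k) z) : ENNReal) ∂μ = ∫⁻ z, (f z : ENNReal) ∂μ := by
    intro k
    rw [← lintegral_map hfm (phiFlow_measurable ν (s k)), hs k]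
  have htend : Filter.Tendsto (fun k => ∫⁻ z, (f (phiFlow ν (s k) z) : ENNReal) ∂μ)
      Filter.atTop (nhds (∫⁻ z, (f (phiFlow ν s0 z) : ENNReal) ∂μ)) := by
    refine tendsto_lintegral_of_dominated_convergence (fun _ => ((nndist 0 f : NNReal) : ENNReal))
      (fun k => hfm.comp (phiFlow_measurable ν (s k))) (fun k => ?_) ?_ ?_
    · refine Filter.Eventually.of_forall fun z => ?_
      exact ENNReal.coe_le_coe.mpr (f.apply_le_nndist_zero _)
    · rw [lintegral_const]
      exact ENNReal.mul_ne_top ENNReal.coe_ne_top (by simp)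
    · refine Filter.Eventually.of_forall fun z => ?_
      refine ENNReal.tendsto_coe.mpr ?_
      have hc : Continuous fun sv : Fin m → ℝ => f (phiFlow ν sv z) :=
        f.continuous.comp (phiFlow_cont_param ν z)
      exact (hc.tendsto s0).comp hlim
  rw [Filter.tendsto_congr hk] at htend
  exact tendsto_nhds_unique htend tendsto_const_nhds

end
end AuxFlow

/-- With `ω = Σ_n v_n ν_n` (`v_n` `ℚ`-linearly independent, `ν_n ∈ ℚ^d`), a Borel
probability measure `μ` on phase space is invariant under the flow of
`H = Σ_j ω_j H_j` for all times iff it is invariant under each of the flows of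
`ℋ_n = v_n Σ_j ν_{n,j} H_j`, whose frequency vectors are `v_n ν_n`. -/
theorem stmt14 (d m : ℕ) (ω : Fin d → ℝ) (hω : ∀ j, 0 < ω j)
    (v : Fin m → ℝ) (hv_indep : LinearIndependent ℚ v)
    (ν : Fin m → Fin d → ℚ) (hdec : ∀ j, ω j = ∑ n, v n * ((ν n j : ℝ)))
    (μ : Measure (Fin d → ℂ)) [IsProbabilityMeasure μ] :
    (∀ t : ℝ, Measure.map (diagFlow d ω t) μ = μ) ↔
      (∀ (n : Fin m) (t : ℝ),
        Measure.map (diagFlow d (fun j => v n * (ν n j : ℝ)) t) μ = μ) := by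
  classical
  have hdiag : ∀ t : ℝ, diagFlow d ω t = phiFlow ν (fun n => v n * t) := by
    intro t
    funext z j
    simp only [diagFlow, phiFlow]
    have h : ω j * t = ∑ n, (ν n j : ℝ) * (v n * t) := by
      rw [hdec j, Finset.sum_mul]
      exact Finset.sum_congr rfl fun n _ => by ring
    rw [h]
  have hsingle : ∀ (n₀ : Fin m) (t : ℝ),
      diagFlow d (fun j => v n₀ * (ν n₀ j : ℝ)) t
        = phiFlow ν (Pi.single n₀ (v n₀ * t)) := by
    intro n₀ t
    funext z j
    simp only [diagFlow, phiFlow]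
    have h : v n₀ * (ν n₀ j : ℝ) * t
        = ∑ n, (ν n j : ℝ) * (Pi.single n₀ (v n₀ * t) : Fin m → ℝ) n := by
      rw [Finset.sum_eq_single n₀]
      · rw [Pi.single_eq_same]; ring
      · intro b _ hb
        rw [Pi.single_eq_of_ne hb, mul_zero]
      · intro habs
        exact absurd (Finset.mem_univ n₀) habs
    rw [h]
  set A : Set (Fin m → ℝ) := {s | Measure.map (phiFlow ν s) μ = μ} with hA
  have hA0 : (0 : Fin m → ℝ) ∈ A := by
    show Measure.map (phiFlow ν 0) μ = μ
    rw [phiFlow_zero, Measure.map_id]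
  have hAadd : ∀ {a b : Fin m → ℝ}, a ∈ A → b ∈ A → a + b ∈ A := by
    intro a b ha hb
    show Measure.map (phiFlow ν (a + b)) μ = μ
    rw [phiFlow_add, ← Measure.map_map (phiFlow_measurable ν a) (phiFlow_measurable ν b)]
    rw [show Measure.map (phiFlow ν b) μ = μ from hb, show Measure.map (phiFlow ν a) μ = μ from ha]
  have hAneg : ∀ {a : Fin m → ℝ}, a ∈ A → -a ∈ A := by
    intro a ha
    show Measure.map (phiFlow ν (-a)) μ = μ
    conv_lhs => rw [show μ = Measure.map (phiFlow ν a) μ from ha.symm]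
    rw [Measure.map_map (phiFlow_measurable ν (-a)) (phiFlow_measurable ν a), ← phiFlow_add,
      neg_add_cancel, phiFlow_zero, Measure.map_id]
  set HA : AddSubgroup (Fin m → ℝ) :=
    { carrier := A
      add_mem' := fun ha hb => hAadd ha hb
      zero_mem' := hA0
      neg_mem' := fun ha => hAneg ha } with hHA
  constructor
  · -- hard direction
    intro h n₀ t
    rw [hsingle n₀ t]
    -- common denominator
    set N : ℕ := ∏ n : Fin m, ∏ j : Fin d, (ν n j).den with hN
    have hNpos : 0 < N :=
      Finset.prod_pos fun n _ => Finset.prod_pos fun j _ => (ν n j).pos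
    have hNint : ∀ (n : Fin m) (j : Fin d), ∃ K : ℤ, ((ν n j : ℝ)) * N = K := by
      intro n j
      have h1 : (ν n j).den ∣ N := by
        refine Dvd.dvd.trans (Finset.dvd_prod_of_mem (fun j' => (ν n j').den)
          (Finset.mem_univ j)) ?_
        exact Finset.dvd_prod_of_mem (fun n' => ∏ j', (ν n' j').den) (Finset.mem_univ n)
      obtain ⟨kk, hkk⟩ := h1
      refine ⟨(ν n j).num * kk, ?_⟩
      have hq : (ν n j) * (N : ℚ) = (((ν n j).num * kk : ℤ) : ℚ) := by
        rw [show ((N : ℕ) : ℚ) = (((ν n j).den : ℚ) * (kk : ℚ)) by exact_mod_cast hkk]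
        rw [← mul_assoc, Rat.mul_den_eq_num]
        push_cast
        ring
      calc (ν n j : ℝ) * N = ((ν n j * (N:ℚ) : ℚ) : ℝ) := by push_cast; ring
        _ = (((ν n j).num * kk : ℤ) : ℝ) := by rw [hq]; push_cast; ring
    choose K hK using hNint
    -- lattice membership
    have hlatA : ∀ kvec : Fin m → ℤ,
        (fun n => (2 * Real.pi * N) * (kvec n : ℝ)) ∈ A := by
      intro kvec
      show Measure.map (phiFlow ν fun n => (2 * Real.pi * N) * (kvec n : ℝ)) μ = μ
      have hid : phiFlow ν (fun n => (2 * Real.pi * N) * (kvec n : ℝ)) = id := by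
        funext z j
        simp only [phiFlow, id_eq]
        have hsum : (∑ n, (ν n j : ℝ) * ((2 * Real.pi * N) * kvec n))
            = (2 * Real.pi) * (((∑ n, K n j * kvec n : ℤ) : ℝ)) := by
          push_cast
          rw [Finset.mul_sum]
          refine Finset.sum_congr rfl fun n _ => ?_
          rw [show (ν n j : ℝ) * ((2 * Real.pi * N) * kvec n)
            = ((ν n j : ℝ) * N) * kvec n * (2 * Real.pi) by ring, hK n j]
          ring
        rw [hsum]
        have hexp : Complex.exp (-Complex.I *
            (((2 * Real.pi) * (((∑ n, K n j * kvec n : ℤ) : ℝ)) : ℝ) : ℂ)) = 1 := by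
          rw [show (-Complex.I *
              (((2 * Real.pi) * (((∑ n, K n j * kvec n : ℤ) : ℝ)) : ℝ) : ℂ))
            = ((-(∑ n, K n j * kvec n) : ℤ) : ℂ) * (2 * Real.pi * Complex.I) by
              push_cast; ring]
          exact Complex.exp_int_mul_two_pi_mul_I _
        rw [hexp, one_mul]
      rw [hid, Measure.map_id]
    -- closedness of A
    have hAclosed : IsClosed A := by
      refine IsSeqClosed.isClosed ?_
      intro s s0 hsmem hslim
      exact phiFlow_inv_of_tendsto ν μ s s0 (fun k => hsmem k) hslim
    -- line membership
    have hlineA : ∀ t' : ℝ, (fun n => t' * v n) ∈ A := by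
      intro t'
      have h1 := h t'
      rw [hdiag t'] at h1
      show Measure.map (phiFlow ν fun n => t' * v n) μ = μ
      rw [show (fun n => t' * v n) = (fun n => v n * t') from funext fun n => mul_comm _ _]
      exact h1
    -- transport to Euclidean space and apply `kron`
    set e : EuclideanSpace ℝ (Fin m) ≃L[ℝ] (Fin m → ℝ) := EuclideanSpace.equiv (Fin m) ℝ with he
    set HE : AddSubgroup (EuclideanSpace ℝ (Fin m)) :=
      HA.comap e.toLinearEquiv.toLinearMap.toAddMonoidHom with hHE
    have hHEcl : IsClosed (HE : Set (EuclideanSpace ℝ (Fin m))) := by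
      have : (HE : Set (EuclideanSpace ℝ (Fin m))) = e ⁻¹' A := rfl
      rw [this]
      exact hAclosed.preimage e.continuous
    set vE : EuclideanSpace ℝ (Fin m) := e.symm v with hvE
    have hvE_eq : (fun n : Fin m => vE n) = v := rfl
    have hvE_li : LinearIndependent ℚ (fun n : Fin m => vE n) := by
      rw [hvE_eq]; exact hv_indep
    have hline : ∀ t' : ℝ, t' • vE ∈ HE := by
      intro t'
      show e (t' • vE) ∈ HA
      rw [_root_.map_smul, hvE, e.apply_symm_apply]
      show (t' • v : Fin m → ℝ) ∈ A
      rw [show (t' • v : Fin m → ℝ) = fun n => t' * v n from rfl]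
      exact hlineA t'
    have hc : (2 * Real.pi * N : ℝ) ≠ 0 := by
      have := Real.pi_pos
      positivity
    have hlat : ∀ i : Fin m,
        (2 * Real.pi * N : ℝ) • EuclideanSpace.single i (1 : ℝ) ∈ HE := by
      intro i
      show e ((2 * Real.pi * N : ℝ) • EuclideanSpace.single i (1 : ℝ)) ∈ HA
      rw [_root_.map_smul]
      show ((2 * Real.pi * N : ℝ) • (e (EuclideanSpace.single i (1:ℝ))) : Fin m → ℝ) ∈ A
      have h2 : ((2 * Real.pi * N : ℝ) • (e (EuclideanSpace.single i (1:ℝ))) : Fin m → ℝ)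
          = fun n => (2 * Real.pi * N) * (((Pi.single i 1 : Fin m → ℤ) n : ℝ)) := by
        funext n
        have h3 : ∀ y : EuclideanSpace ℝ (Fin m), e y n = y n := fun y => rfl
        rw [Pi.smul_apply, h3, EuclideanSpace.single_apply]
        simp only [Pi.single_apply]
        by_cases hni : n = i <;> simp [hni]
      rw [h2]
      exact hlatA (Pi.single i 1)
    have hx := kron vE hvE_li (2 * Real.pi * N : ℝ) hc HE hHEcl hline hlat
      (e.symm (Pi.single n₀ (v n₀ * t)))
    have : e (e.symm (Pi.single n₀ (v n₀ * t))) ∈ HA := hx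
    rw [e.apply_symm_apply] at this
    exact this
  · -- easy direction
    intro h t
    rw [hdiag t]
    have hsum : (fun n => v n * t) = ∑ n : Fin m, Pi.single n (v n * t) := by
      funext j
      rw [Finset.sum_apply]
      simp [Pi.single_apply]
    show (fun n => v n * t) ∈ A
    rw [hsum]
    have : (∑ n : Fin m, Pi.single n (v n * t)) ∈ HA := by
      refine AddSubgroup.sum_mem HA fun n _ => ?_
      have h1 := h n t
      rw [hsingle n t] at h1
      exact h1
    exact this
end
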